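/- Let g₁, g₂ be nonzero, linearly independent vectors in a real inner product space and let g_v = U(U(O(g₁,g₂)) + U(O(g₂,g₁))) be the unit ConFIG direction. Then S_c(g_v, g₁) = S_c(g_v, g₂) = √((1 + S_c(g₁,g₂))/2). -/

import Mathlib

open scoped RealInnerProductSpace

set_option maxHeartbeats 1000000 in
theorem stmt_16 {E : Type*} [NormedAddCommGroup E] [InnerProductSpace ℝ E]
    (g₁ g₂ : E) (h₁ : g₁ ≠ 0) (h₂ : g₂ ≠ 0)
    (hli : LinearIndependent ℝ ![g₁, g₂]) :
    let O : E → E → E := fun u v => v - (⟪u, v⟫ / ‖u‖ ^ 2) • u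
    let U : E → E := fun v => ‖v‖⁻¹ • v
    let gv : E := U (U (O g₁ g₂) + U (O g₂ g₁))
    ⟪gv, g₁⟫ / (‖gv‖ * ‖g₁‖) = Real.sqrt ((1 + ⟪g₁, g₂⟫ / (‖g₁‖ * ‖g₂‖)) / 2) ∧
    ⟪gv, g₂⟫ / (‖gv‖ * ‖g₂‖) = Real.sqrt ((1 + ⟪g₁, g₂⟫ / (‖g₁‖ * ‖g₂‖)) / 2) := by
  intro O U gv
  have hO : ∀ u v : E, O u v = v - (⟪u, v⟫ / ‖u‖ ^ 2) • u := fun _ _ => rfl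
  have hU : ∀ v : E, U v = ‖v‖⁻¹ • v := fun _ => rfl
  have hgv : gv = U (U (O g₁ g₂) + U (O g₂ g₁)) := rfl
  have hn₁ : (0:ℝ) < ‖g₁‖ := norm_pos_iff.mpr h₁
  have hn₂ : (0:ℝ) < ‖g₂‖ := norm_pos_iff.mpr h₂
  set p : ℝ := ⟪g₁, g₂⟫ with hp
  rw [linearIndependent_fin2] at hli
  obtain ⟨-, hnr⟩ := hli
  simp only [Matrix.cons_val_one, Matrix.head_cons, Matrix.cons_val_zero] at hnr
  -- hnr : ∀ r : ℝ, r • g₂ ≠ g₁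
  have hg11 : ⟪g₁, g₁⟫ = ‖g₁‖^2 := real_inner_self_eq_norm_sq g₁
  have hg22 : ⟪g₂, g₂⟫ = ‖g₂‖^2 := real_inner_self_eq_norm_sq g₂
  have hg21 : ⟪g₂, g₁⟫ = p := (real_inner_comm g₁ g₂).trans hp.symm
  set a : E := O g₁ g₂ with ha
  set b : E := O g₂ g₁ with hb
  have hag₁ : ⟪a, g₁⟫ = 0 := by
    rw [ha, hO, inner_sub_left, real_inner_smul_left, hg21, hg11, ← hp]
    field_simp
    ring
  have hag₂ : ⟪a, g₂⟫ = ‖g₂‖^2 - p^2/‖g₁‖^2 := by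
    rw [ha, hO, inner_sub_left, real_inner_smul_left, hg22, ← hp]
    ring
  have hbg₂ : ⟪b, g₂⟫ = 0 := by
    rw [hb, hO, inner_sub_left, real_inner_smul_left, hg22, ← hp, hg21]
    field_simp
    ring
  have hbg₁ : ⟪b, g₁⟫ = ‖g₁‖^2 - p^2/‖g₂‖^2 := by
    rw [hb, hO, inner_sub_left, real_inner_smul_left, hg11, hg21]
    ring
  have hab : ⟪a, b⟫ = -(p/‖g₂‖^2) * (‖g₂‖^2 - p^2/‖g₁‖^2) := by
    rw [hb, hO, inner_sub_right, real_inner_smul_right, hag₁, hg21, hag₂]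
    ring
  have hna : ‖a‖^2 = ‖g₂‖^2 - p^2/‖g₁‖^2 := by
    rw [← real_inner_self_eq_norm_sq]
    nth_rewrite 2 [ha]
    rw [hO, inner_sub_right, real_inner_smul_right, hag₁, hag₂, ← hp]
    ring
  have hnb : ‖b‖^2 = ‖g₁‖^2 - p^2/‖g₂‖^2 := by
    rw [← real_inner_self_eq_norm_sq]
    nth_rewrite 2 [hb]
    rw [hO, inner_sub_right, real_inner_smul_right, hbg₂, hbg₁, hg21]
    ring
  -- a and b are nonzero
  have ha0 : a ≠ 0 := by
    intro h
    rw [ha, hO, sub_eq_zero] at h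
    by_cases hz : (⟪g₁, g₂⟫ / ‖g₁‖ ^ 2 : ℝ) = 0
    · rw [hz, zero_smul] at h; exact h₂ h
    · exact hnr (⟪g₁, g₂⟫ / ‖g₁‖ ^ 2)⁻¹ ((inv_smul_eq_iff₀ hz).mpr h)
  have hb0 : b ≠ 0 := by
    intro h
    rw [hb, hO, sub_eq_zero] at h
    exact hnr (⟪g₂, g₁⟫ / ‖g₂‖ ^ 2) h.symm
  have hA : (0:ℝ) < ‖a‖ := norm_pos_iff.mpr ha0
  have hB : (0:ℝ) < ‖b‖ := norm_pos_iff.mpr hb0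
  -- strict Cauchy-Schwarz : p < ‖g₁‖‖g₂‖
  have hcs : p < ‖g₁‖ * ‖g₂‖ := by
    rw [hp]
    apply inner_lt_norm_mul_iff_real.mpr
    intro h
    exact hnr (‖g₂‖⁻¹ * ‖g₁‖) (by
      rw [mul_smul, ← h, smul_smul, inv_mul_cancel₀ (ne_of_gt hn₂), one_smul])
  -- relation between ‖a‖ and ‖b‖ : ‖g₁‖‖a‖ = ‖g₂‖‖b‖
  have hAB : ‖g₁‖ * ‖a‖ = ‖g₂‖ * ‖b‖ := by
    have hsq : (‖g₁‖ * ‖a‖)^2 = (‖g₂‖ * ‖b‖)^2 := by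
      rw [mul_pow, mul_pow, hna, hnb]; field_simp
    have habs := (sq_eq_sq_iff_abs_eq_abs (‖g₁‖ * ‖a‖) (‖g₂‖ * ‖b‖)).mp hsq
    rwa [abs_of_pos (by positivity), abs_of_pos (by positivity)] at habs
  set u : E := U a with hu
  set v : E := U b with hv
  have hn₁' : ‖g₁‖ ≠ 0 := ne_of_gt hn₁
  have hn₂' : ‖g₂‖ ≠ 0 := ne_of_gt hn₂
  have hA' : ‖a‖ ≠ 0 := ne_of_gt hA
  have hB' : ‖b‖ ≠ 0 := ne_of_gt hB
  have hA2 : ‖g₂‖ ^ 2 - p ^ 2 / ‖g₁‖ ^ 2 = ‖a‖ * ‖a‖ := by rw [← hna]; ring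
  have hAeq : ‖a‖ = ‖g₂‖ * ‖b‖ / ‖g₁‖ := by
    rw [eq_div_iff hn₁']; linarith [hAB]
  have huv : ⟪u, v⟫ = -(p / (‖g₁‖ * ‖g₂‖)) := by
    rw [hu, hv, hU, hU, real_inner_smul_left, real_inner_smul_right, hab, hA2, hAeq]
    field_simp
  have hsum₁ : ⟪u + v, g₁⟫ = ‖b‖ := by
    rw [inner_add_left, hu, hv, hU, hU, real_inner_smul_left, real_inner_smul_left,
      hag₁, hbg₁, ← hnb]
    field_simp
    ring
  have hsum₂ : ⟪u + v, g₂⟫ = ‖a‖ := by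
    rw [inner_add_left, hu, hv, hU, hU, real_inner_smul_left, real_inner_smul_left,
      hag₂, hbg₂, ← hna]
    field_simp
    ring
  have hnu : ‖u‖ = 1 := by rw [hu, hU, norm_smul]; simp [abs_of_pos (inv_pos.mpr hA),
    inv_mul_cancel₀ (ne_of_gt hA)]
  have hnv : ‖v‖ = 1 := by rw [hv, hU, norm_smul]; simp [abs_of_pos (inv_pos.mpr hB),
    inv_mul_cancel₀ (ne_of_gt hB)]
  set W : ℝ := ‖u + v‖ with hW
  have hW2 : W^2 = 2 - 2 * (p / (‖g₁‖ * ‖g₂‖)) := by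
    rw [hW, ← real_inner_self_eq_norm_sq, real_inner_add_add_self, real_inner_self_eq_norm_sq,
      real_inner_self_eq_norm_sq, hnu, hnv, huv]
    ring
  have hc1 : p / (‖g₁‖ * ‖g₂‖) < 1 := by
    rw [div_lt_one (by positivity)]; exact hcs
  have hWpos : (0:ℝ) < W := by
    have : (0:ℝ) < W^2 := by rw [hW2]; linarith
    have hW0 : (0:ℝ) ≤ W := norm_nonneg _
    nlinarith
  have hgvnorm : ‖gv‖ = 1 := by
    rw [hgv, hU, norm_smul, ← hW, Real.norm_eq_abs, abs_inv, abs_of_pos hWpos,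
      inv_mul_cancel₀ (ne_of_gt hWpos)]
  have hc0 : -1 ≤ p / (‖g₁‖ * ‖g₂‖) := by
    rw [le_div_iff₀ (by positivity), hp]
    have := abs_real_inner_le_norm g₁ g₂
    rw [abs_le] at this
    linarith [this.1]
  set c : ℝ := p / (‖g₁‖ * ‖g₂‖) with hc
  have h1c : (1:ℝ) - c ≠ 0 := ne_of_gt (by linarith)
  have hXb : ‖b‖ ^ 2 = ‖g₁‖ ^ 2 * ((1 - c) * (1 + c)) := by
    rw [hnb, hc]; field_simp; ring
  have hXa : ‖a‖ ^ 2 = ‖g₂‖ ^ 2 * ((1 - c) * (1 + c)) := by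
    rw [hna, hc]; field_simp; ring
  have h2c : (2:ℝ) - 2 * c = 2 * (1 - c) := by ring
  constructor
  · rw [hgvnorm, hgv, hU, real_inner_smul_left, hsum₁, ← hW, one_mul]
    rw [show (1 + c) / 2 = (W⁻¹ * ‖b‖ / ‖g₁‖)^2 by
      rw [div_pow, mul_pow, inv_pow, hW2, hXb, h2c]
      field_simp]
    rw [Real.sqrt_sq (by positivity)]
  · rw [hgvnorm, hgv, hU, real_inner_smul_left, hsum₂, ← hW, one_mul]
    rw [show (1 + c) / 2 = (W⁻¹ * ‖a‖ / ‖g₂‖)^2 by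
      rw [div_pow, mul_pow, inv_pow, hW2, hXa, h2c]
      field_simp]
    rw [Real.sqrt_sq (by positivity)]
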